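/- Let M : Fin k → Fin l → ℝ be a Monge matrix. Let 0 = p 0 < p 1 < … < p a = k and 0 = q 0 < q 1 < … < q b = l be strictly increasing sequences of natural numbers partitioning the rows into consecutive blocks R s = {i : p s ≤ i < p (s+1)} and the columns into consecutive blocks C t = {j : q t ≤ j < q (t+1)}. Then the block-minima matrix M' : Fin a → Fin b → ℝ defined by M' s t = min { M i j : p s ≤ i < p (s+1), q t ≤ j < q (t+1) } is again a Monge matrix. (Fact 2 of the paper.) -/
import Mathlib

/-- A rectangular Monge matrix. -/
def IsMonge {k l : ℕ} (M : Fin k → Fin l → ℝ) : Prop :=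
  ∀ i1 i2 : Fin k, ∀ j1 j2 : Fin l, i1 ≤ i2 → j1 ≤ j2 →
    M i2 j1 + M i1 j2 ≤ M i1 j1 + M i2 j2

/-- Fact 2: partition the rows of a Monge matrix into consecutive blocks
`[p s, p (s+1))` and the columns into consecutive blocks `[q t, q (t+1))`.
Then the matrix of block minima is again a Monge matrix.
Here `M' s t = min { M i j : p s ≤ i < p (s+1), q t ≤ j < q (t+1) }` is
characterized by being a lower bound on the block entries that is attained. -/
theorem block_min_isMonge {k l a b : ℕ} (M : Fin k → Fin l → ℝ)
    (hM : IsMonge M)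
    (p : Fin (a + 1) → ℕ) (q : Fin (b + 1) → ℕ)
    (hp : StrictMono p) (hq : StrictMono q)
    (hp0 : p 0 = 0) (hpa : p (Fin.last a) = k)
    (hq0 : q 0 = 0) (hqb : q (Fin.last b) = l)
    (M' : Fin a → Fin b → ℝ)
    (hlb : ∀ (s : Fin a) (t : Fin b) (i : Fin k) (j : Fin l),
      p s.castSucc ≤ (i : ℕ) → (i : ℕ) < p s.succ →
      q t.castSucc ≤ (j : ℕ) → (j : ℕ) < q t.succ →
      M' s t ≤ M i j)
    (hattain : ∀ (s : Fin a) (t : Fin b), ∃ (i : Fin k) (j : Fin l),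
      p s.castSucc ≤ (i : ℕ) ∧ (i : ℕ) < p s.succ ∧
      q t.castSucc ≤ (j : ℕ) ∧ (j : ℕ) < q t.succ ∧
      M' s t = M i j) :
    IsMonge M' := by
  intro s1 s2 t1 t2 hs ht
  obtain ⟨i1, j1, hi1l, hi1u, hj1l, hj1u, e11⟩ := hattain s1 t1
  obtain ⟨i2, j2, hi2l, hi2u, hj2l, hj2u, e22⟩ := hattain s2 t2
  have hpc : p s1.castSucc ≤ p s2.castSucc :=
    hp.monotone (Fin.castSucc_le_castSucc_iff.mpr hs)
  have hps : p s1.succ ≤ p s2.succ := hp.monotone (Fin.succ_le_succ_iff.mpr hs)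
  have hqc : q t1.castSucc ≤ q t2.castSucc :=
    hq.monotone (Fin.castSucc_le_castSucc_iff.mpr ht)
  have hqs : q t1.succ ≤ q t2.succ := hq.monotone (Fin.succ_le_succ_iff.mpr ht)
  rw [e11, e22]
  by_cases hij : (i1 : ℕ) ≤ i2
  · by_cases hjj : (j1 : ℕ) ≤ j2
    · have h1 := hM i1 i2 j1 j2 (by exact_mod_cast hij) (by exact_mod_cast hjj)
      have h2 := hlb s2 t1 i2 j1 hi2l hi2u hj1l hj1u
      have h3 := hlb s1 t2 i1 j2 hi1l hi1u hj2l hj2u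
      linarith
    · push_neg at hjj
      have h2 := hlb s2 t1 i2 j2 hi2l hi2u (le_trans hqc hj2l) (lt_trans hjj hj1u)
      have h3 := hlb s1 t2 i1 j1 hi1l hi1u (le_of_lt (lt_of_le_of_lt hj2l hjj))
        (lt_of_lt_of_le hj1u hqs)
      linarith
  · push_neg at hij
    have h2 := hlb s2 t1 i1 j1 (le_of_lt (lt_of_le_of_lt hi2l hij))
      (lt_of_lt_of_le hi1u hps) hj1l hj1u
    have h3 := hlb s1 t2 i2 j2 (le_trans hpc hi2l) (lt_trans hij hi1u) hj2l hj2u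
    linarith
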